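/- Let x, y ∈ [0,1] and let z ∈ ℝ satisfy x·y ≤ z ≤ min(x, y). Then z is the value of a Frank t-norm T_λ at (x, y) for some parameter λ ∈ [0,1]: either z = min(x, y), or z = x·y, or there exists λ ∈ (0, 1) such that z = log(1 + (λˣ − 1)(λʸ − 1)/(λ − 1)) / log λ. (Representation of the set of coherent prevision assessments on {A|H, A|K, (A|H)∧(A|K)} by Frank t-norms with λ ∈ [0,1].) -/

import Mathlib

open Filter Set Real Topology

private lemma frank_g_eq (x y l : ℝ) (hl : l ∈ Set.Ioo (0:ℝ) 1) :
    1 + (l ^ x - 1) * (l ^ y - 1) / (l - 1)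
      = (l ^ x + l ^ y - l - l ^ x * l ^ y) / (1 - l) := by
  have h1 : l - 1 ≠ 0 := by nlinarith [hl.2]
  have h2 : (1:ℝ) - l ≠ 0 := by nlinarith [hl.2]
  rw [eq_div_iff h2]
  field_simp
  ring

private lemma frank_g_lb (x y l : ℝ) (hx : 0 ≤ x) (hx1 : x ≤ 1) (hy : 0 ≤ y) (hy1 : y ≤ 1)
    (hl : l ∈ Set.Ioo (0:ℝ) 1) :
    l ^ x ≤ 1 + (l ^ x - 1) * (l ^ y - 1) / (l - 1) := by
  rw [frank_g_eq x y l hl]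
  have hby : l ^ (1:ℝ) ≤ l ^ y := Real.rpow_le_rpow_of_exponent_ge hl.1 hl.2.le hy1
  rw [Real.rpow_one] at hby
  have hax : l ^ x ≤ 1 := Real.rpow_le_one hl.1.le hl.2.le hx
  have h1l : (0:ℝ) < 1 - l := by linarith [hl.2]
  rw [le_div_iff₀ h1l]
  nlinarith

private lemma frank_g_ub (x y l : ℝ) (hxy : x ≤ y) (hl : l ∈ Set.Ioo (0:ℝ) 1) :
    1 + (l ^ x - 1) * (l ^ y - 1) / (l - 1) ≤ 2 * l ^ x / (1 - l) := by
  rw [frank_g_eq x y l hl]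
  have h1l : (0:ℝ) < 1 - l := by linarith [hl.2]
  have hba : l ^ y ≤ l ^ x := Real.rpow_le_rpow_of_exponent_ge hl.1 hl.2.le hxy
  have ha : 0 < l ^ x := Real.rpow_pos_of_pos hl.1 x
  have hb : 0 < l ^ y := Real.rpow_pos_of_pos hl.1 y
  rw [div_le_div_iff₀ h1l h1l]
  have : 0 ≤ 2 * l ^ x - (l ^ x + l ^ y - l - l ^ x * l ^ y) := by nlinarith [mul_pos ha hb, hl.1]
  nlinarith [mul_nonneg this h1l.le]

private lemma frank_tendsto_zero (x y : ℝ) (hx : x ∈ Set.Ioo (0:ℝ) 1) (hy : y ∈ Set.Ioo (0:ℝ) 1)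
    (hxy : x ≤ y) :
    Tendsto (fun l => Real.log (1 + (l ^ x - 1) * (l ^ y - 1) / (l - 1)) / Real.log l)
      (𝓝[Set.Ioo (0:ℝ) 1] 0) (𝓝 x) := by
  set l₀ := 𝓝[Set.Ioo (0:ℝ) 1] (0:ℝ)
  have hmono : l₀ ≤ 𝓝[≠] (0:ℝ) := nhdsWithin_mono _ (fun t ht => ne_of_gt ht.1)
  have hlogbot : Tendsto Real.log l₀ atBot := Real.tendsto_log_nhdsNE_zero.mono_left hmono
  have hnegtop : Tendsto (fun l => -Real.log l) l₀ atTop := tendsto_neg_atBot_atTop.comp hlogbot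
  have hc : Tendsto (fun l => Real.log 2 - Real.log (1 - l)) l₀ (𝓝 (Real.log 2)) := by
    have h1 : Tendsto (fun l : ℝ => (1:ℝ) - l) l₀ (𝓝 1) := by
      have hcont : Continuous (fun l : ℝ => (1:ℝ) - l) := by continuity
      simpa using (hcont.tendsto 0).mono_left nhdsWithin_le_nhds
    have h2 : Tendsto (fun l : ℝ => Real.log (1 - l)) l₀ (𝓝 0) := by
      have := (Real.continuousAt_log one_ne_zero).tendsto.comp h1
      simpa [Function.comp_def] using this
    simpa using tendsto_const_nhds.sub h2
  have hlow0 : Tendsto (fun l => (Real.log 2 - Real.log (1 - l)) / Real.log l) l₀ (𝓝 0) := by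
    have h := (hc.div_atTop hnegtop).neg
    rw [neg_zero] at h
    exact h.congr fun l => by rw [div_neg, neg_neg]
  have hlow : Tendsto (fun l => x + (Real.log 2 - Real.log (1 - l)) / Real.log l) l₀ (𝓝 x) := by
    simpa using tendsto_const_nhds.add hlow0
  refine tendsto_of_tendsto_of_tendsto_of_le_of_le' hlow tendsto_const_nhds ?_ ?_
  · filter_upwards [eventually_mem_nhdsWithin] with l hl
    have hL : Real.log l < 0 := Real.log_neg hl.1 hl.2
    have h1l : (0:ℝ) < 1 - l := by linarith [hl.2]
    have hgpos : 0 < 1 + (l ^ x - 1) * (l ^ y - 1) / (l - 1) :=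
      lt_of_lt_of_le (Real.rpow_pos_of_pos hl.1 x)
        (frank_g_lb x y l hx.1.le hx.2.le hy.1.le hy.2.le hl)
    have hub := frank_g_ub x y l hxy hl
    have hlog_ub : Real.log (1 + (l ^ x - 1) * (l ^ y - 1) / (l - 1))
        ≤ Real.log 2 + x * Real.log l - Real.log (1 - l) := by
      have := Real.log_le_log hgpos hub
      rw [Real.log_div (mul_pos two_pos (Real.rpow_pos_of_pos hl.1 x)).ne' h1l.ne', Real.log_mul (by norm_num)
        (Real.rpow_pos_of_pos hl.1 x).ne', Real.log_rpow hl.1] at this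
      linarith
    have heq : x + (Real.log 2 - Real.log (1 - l)) / Real.log l
        = (x * Real.log l + (Real.log 2 - Real.log (1 - l))) / Real.log l := by
      rw [add_div, mul_div_cancel_right₀ _ hL.ne]
    rw [heq, div_le_div_right_of_neg hL]
    linarith
  · filter_upwards [eventually_mem_nhdsWithin] with l hl
    have hL : Real.log l < 0 := Real.log_neg hl.1 hl.2
    have hlog_lb : x * Real.log l
        ≤ Real.log (1 + (l ^ x - 1) * (l ^ y - 1) / (l - 1)) := by
      have := Real.log_le_log (Real.rpow_pos_of_pos hl.1 x)
        (frank_g_lb x y l hx.1.le hx.2.le hy.1.le hy.2.le hl)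
      rwa [Real.log_rpow hl.1] at this
    rw [div_le_iff_of_neg hL]
    linarith

private lemma frank_tendsto_one (x y : ℝ) (hx : x ∈ Set.Ioo (0:ℝ) 1) (hy : y ∈ Set.Ioo (0:ℝ) 1) :
    Tendsto (fun l => Real.log (1 + (l ^ x - 1) * (l ^ y - 1) / (l - 1)) / Real.log l)
      (𝓝[Set.Ioo (0:ℝ) 1] 1) (𝓝 (x * y)) := by
  set l₁ := 𝓝[Set.Ioo (0:ℝ) 1] (1:ℝ)
  have hmono : l₁ ≤ 𝓝[≠] (1:ℝ) := nhdsWithin_mono _ (fun t ht => ne_of_lt ht.2)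
  have hA : Tendsto (fun l : ℝ => (l ^ x - 1) / (l - 1)) (𝓝[≠] (1:ℝ)) (𝓝 x) := by
    have h := hasDerivAt_iff_tendsto_slope.mp
      (Real.hasDerivAt_rpow_const (x := (1:ℝ)) (p := x) (Or.inl one_ne_zero))
    simpa [slope_fun_def_field, Real.one_rpow] using h
  have hB : Tendsto (fun l : ℝ => (l ^ y - 1) / (l - 1)) (𝓝[≠] (1:ℝ)) (𝓝 y) := by
    have h := hasDerivAt_iff_tendsto_slope.mp
      (Real.hasDerivAt_rpow_const (x := (1:ℝ)) (p := y) (Or.inl one_ne_zero))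
    simpa [slope_fun_def_field, Real.one_rpow] using h
  have hlogslope : Tendsto (fun l : ℝ => Real.log l / (l - 1)) (𝓝[≠] (1:ℝ)) (𝓝 1) := by
    have h := hasDerivAt_iff_tendsto_slope.mp (Real.hasDerivAt_log one_ne_zero)
    simpa [slope_fun_def_field, Real.log_one] using h
  have hC : Tendsto (fun l : ℝ => (l - 1) / Real.log l) (𝓝[≠] (1:ℝ)) (𝓝 1) := by
    have h := hlogslope.inv₀ one_ne_zero
    simpa [inv_div] using h
  have hLog1 : Tendsto (fun u : ℝ => Real.log (1 + u) / u) (𝓝[≠] (0:ℝ)) (𝓝 1) := by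
    have h := hasDerivAt_iff_tendsto_slope.mp (Real.hasDerivAt_log one_ne_zero)
    have hshift : Tendsto (fun u : ℝ => 1 + u) (𝓝[≠] (0:ℝ)) (𝓝[≠] (1:ℝ)) := by
      rw [tendsto_nhdsWithin_iff]
      constructor
      · have hcont : Continuous (fun u : ℝ => 1 + u) := by continuity
        simpa using (hcont.tendsto 0).mono_left nhdsWithin_le_nhds
      · filter_upwards [eventually_mem_nhdsWithin] with u hu
        simpa using hu
    have := h.comp hshift
    simpa [slope_fun_def_field, Real.log_one, Function.comp_def, add_sub_cancel_left] using this
  have huy : Tendsto (fun l : ℝ => l ^ y - 1) l₁ (𝓝 0) := by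
    have hcont := (Real.continuousAt_rpow_const 1 y (Or.inl one_ne_zero)).tendsto
    have h2 : Tendsto (fun l : ℝ => l ^ y - 1) l₁ (𝓝 ((1:ℝ) ^ (y:ℝ) - 1)) :=
      (hcont.mono_left nhdsWithin_le_nhds).sub tendsto_const_nhds
    simpa [Real.one_rpow] using h2
  have hu : Tendsto (fun l : ℝ => (l ^ x - 1) * (l ^ y - 1) / (l - 1)) l₁ (𝓝[≠] (0:ℝ)) := by
    rw [tendsto_nhdsWithin_iff]
    constructor
    · have := (hA.mono_left hmono).mul huy
      rw [mul_zero] at this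
      exact this.congr fun l => by rw [div_mul_eq_mul_div]
    · filter_upwards [eventually_mem_nhdsWithin] with l hl
      have hax : l ^ x < 1 := Real.rpow_lt_one hl.1.le hl.2 hx.1
      have hay : l ^ y < 1 := Real.rpow_lt_one hl.1.le hl.2 hy.1
      have : (l ^ x - 1) * (l ^ y - 1) / (l - 1) < 0 :=
        div_neg_of_pos_of_neg (mul_pos_of_neg_of_neg (by linarith) (by linarith)) (by linarith [hl.2])
      exact this.ne
  have hprod := (hLog1.comp hu).mul
    (((hA.mono_left hmono).mul (hB.mono_left hmono)).mul (hC.mono_left hmono))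
  rw [show (1 : ℝ) * (x * y * 1) = x * y by ring] at hprod
  refine hprod.congr' ?_
  filter_upwards [eventually_mem_nhdsWithin] with l hl
  have hax : l ^ x < 1 := Real.rpow_lt_one hl.1.le hl.2 hx.1
  have hay : l ^ y < 1 := Real.rpow_lt_one hl.1.le hl.2 hy.1
  have hdx : l ^ x - 1 ≠ 0 := by linarith
  have hdy : l ^ y - 1 ≠ 0 := by linarith
  have hd : l - 1 ≠ 0 := by linarith [hl.2]
  have hL : Real.log l ≠ 0 := (Real.log_neg hl.1 hl.2).ne
  simp only [Function.comp]
  rw [div_mul_eq_mul_div, div_mul_eq_mul_div, div_mul_eq_mul_div]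
  field_simp

private lemma frank_key (x y z : ℝ) (hx : x ∈ Set.Ioo (0:ℝ) 1) (hy : y ∈ Set.Ioo (0:ℝ) 1)
    (hxy : x ≤ y) (h1 : x * y < z) (h2 : z < x) :
    ∃ l ∈ Set.Ioo (0 : ℝ) 1,
      z = Real.log (1 + (l ^ x - 1) * (l ^ y - 1) / (l - 1)) / Real.log l := by
  set f : ℝ → ℝ := fun l => Real.log (1 + (l ^ x - 1) * (l ^ y - 1) / (l - 1)) / Real.log l with hf
  have hcont : ContinuousOn f (Set.Ioo (0:ℝ) 1) := by
    intro l hl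
    apply ContinuousAt.continuousWithinAt
    have hgpos : 0 < 1 + (l ^ x - 1) * (l ^ y - 1) / (l - 1) :=
      lt_of_lt_of_le (Real.rpow_pos_of_pos hl.1 x)
        (frank_g_lb x y l hx.1.le hx.2.le hy.1.le hy.2.le hl)
    have hd : l - 1 ≠ 0 := by nlinarith [hl.2]
    have hL : Real.log l ≠ 0 := (Real.log_neg hl.1 hl.2).ne
    have hgc : ContinuousAt (fun l : ℝ => 1 + (l ^ x - 1) * (l ^ y - 1) / (l - 1)) l := by
      apply continuousAt_const.add
      apply ContinuousAt.div
      · exact ((Real.continuousAt_rpow_const l x (Or.inl hl.1.ne')).sub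
          continuousAt_const).mul
          ((Real.continuousAt_rpow_const l y (Or.inl hl.1.ne')).sub continuousAt_const)
      · exact continuousAt_id.sub continuousAt_const
      · exact hd
    exact (hgc.log hgpos.ne').div (Real.continuousAt_log hl.1.ne') hL
  haveI hne0 : (𝓝[Set.Ioo (0:ℝ) 1] (0:ℝ)).NeBot := by
    apply mem_closure_iff_nhdsWithin_neBot.mp
    rw [closure_Ioo (by norm_num : (0:ℝ) ≠ 1)]
    exact ⟨le_refl 0, by norm_num⟩
  haveI hne1 : (𝓝[Set.Ioo (0:ℝ) 1] (1:ℝ)).NeBot := by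
    apply mem_closure_iff_nhdsWithin_neBot.mp
    rw [closure_Ioo (by norm_num : (0:ℝ) ≠ 1)]
    exact ⟨by norm_num, le_refl 1⟩
  have key := isPreconnected_Ioo.intermediate_value_Ioo
    (le_principal_iff.mpr self_mem_nhdsWithin) (le_principal_iff.mpr self_mem_nhdsWithin)
    hcont (frank_tendsto_one x y hx hy) (frank_tendsto_zero x y hx hy hxy)
  obtain ⟨l, hl, hfl⟩ := key ⟨h1, h2⟩
  exact ⟨l, hl, hfl.symm⟩

/-- Any `z` with `x·y ≤ z ≤ min(x,y)` is the value of a Frank t-norm `T_λ` at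
    `(x,y)` for some `λ ∈ [0,1]` (representation of the coherent assessments
    on `{A|H, A|K, (A|H)∧(A|K)}` by Frank t-norms with `λ ∈ [0,1]`). -/
theorem frank_tnorm_representation_unit_interval (x y z : ℝ)
    (hx : x ∈ Set.Icc (0 : ℝ) 1) (hy : y ∈ Set.Icc (0 : ℝ) 1)
    (h1 : x * y ≤ z) (h2 : z ≤ min x y) :
    z = min x y ∨ z = x * y ∨
      ∃ l ∈ Set.Ioo (0 : ℝ) 1,
        z = Real.log (1 + (l ^ x - 1) * (l ^ y - 1) / (l - 1)) / Real.log l := by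
  rcases h2.eq_or_lt with h2' | h2'
  · exact Or.inl h2'
  rcases h1.eq_or_lt with h1' | h1'
  · exact Or.inr (Or.inl h1'.symm)
  refine Or.inr (Or.inr ?_)
  have hchain : x * y < min x y := h1'.trans h2'
  have hx0 : 0 < x := by
    rcases hx.1.eq_or_lt with h | h
    · exfalso; rw [← h] at hchain; simp at hchain
    · exact h
  have hy0 : 0 < y := by
    rcases hy.1.eq_or_lt with h | h
    · exfalso; rw [← h] at hchain; simp at hchain
    · exact h
  have hx1 : x < 1 := by
    rcases hx.2.eq_or_lt with h | h
    · exfalso; rw [h] at hchain; rw [min_eq_right hy.2] at hchain; simp at hchain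
    · exact h
  have hy1 : y < 1 := by
    rcases hy.2.eq_or_lt with h | h
    · exfalso; rw [h] at hchain
      rw [min_eq_left hx.2] at hchain; simp at hchain
    · exact h
  rcases le_total x y with hxy | hxy
  · have hmin : min x y = x := min_eq_left hxy
    exact frank_key x y z ⟨hx0, hx1⟩ ⟨hy0, hy1⟩ hxy h1' (hmin ▸ h2')
  · have hmin : min x y = y := min_eq_right hxy
    obtain ⟨l, hl, hfl⟩ := frank_key y x z ⟨hy0, hy1⟩ ⟨hx0, hx1⟩ hxy
      (by rw [mul_comm]; exact h1') (hmin ▸ h2')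
    exact ⟨l, hl, by rw [hfl]; ring_nf⟩
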